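/- Let b, c, e be real numbers with b ≠ 1, c ≠ 1 and e > 0, and let 0 < z < 1/2. Then Σ_{k=0}^∞ (b)_k(c)_k/((k+1)!·(e)_k)·(z/(z−1))^k = (1−z)^b·((c−e)/(c−1))·Σ_{k=0}^∞ (b)_k(e−c+1)_k z^k/((k+1)!·(e)_k) + (e−1)(1−z)(1−(1−z)^{b−1})/((c−1)(b−1)z). (This is the relation ₃F₂(1,b,c; 2,e; z/(z−1)) = (1−z)^b((c−e)/(c−1))·₃F₂(1,b,e−c+1; 2,e; z) + (e−1)(1−z)(1−(1−z)^{b−1})/((c−1)(b−1)z).) -/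

import Mathlib

open Real Filter Finset

/-- Rising factorial (Pochhammer symbol) `(a)_k`. -/
noncomputable def poch (a : ℝ) (k : ℕ) : ℝ := (ascPochhammer ℝ k).eval a


lemma poch_zero (a : ℝ) : poch a 0 = 1 := by simp [poch]
lemma poch_succ (a : ℝ) (k : ℕ) : poch a (k+1) = poch a k * (a + k) := by
  simp [poch, ascPochhammer_succ_right]
lemma poch_eq_prod (a : ℝ) (k : ℕ) : poch a k = ∏ i ∈ range k, (a + i) := by
  induction k with
  | zero => simp [poch_zero]
  | succ n ih => rw [poch_succ, ih, prod_range_succ]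
lemma poch_succ_left (a : ℝ) (k : ℕ) : poch a (k+1) = a * poch (a+1) k := by
  rw [poch_eq_prod, poch_eq_prod, Finset.prod_range_succ']
  push_cast
  rw [add_zero, mul_comm]
  exact congrArg (a * ·) (Finset.prod_congr rfl (fun i _ => by ring))
lemma poch_add (a : ℝ) (k m : ℕ) : poch a (k + m) = poch a k * poch (a + k) m := by
  rw [poch_eq_prod, poch_eq_prod, poch_eq_prod, Finset.prod_range_add]
  congr 1
  exact Finset.prod_congr rfl (fun i _ => by push_cast; ring)
lemma poch_nonneg {a : ℝ} (ha : 0 ≤ a) (k : ℕ) : 0 ≤ poch a k := by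
  rw [poch_eq_prod]; exact Finset.prod_nonneg fun i _ => by positivity
lemma poch_pos {a : ℝ} (ha : 0 < a) (k : ℕ) : 0 < poch a k := by
  rw [poch_eq_prod]; exact Finset.prod_pos fun i _ => by positivity
lemma poch_ne_zero {a : ℝ} (ha : ∀ i : ℕ, a + i ≠ 0) (k : ℕ) : poch a k ≠ 0 := by
  rw [poch_eq_prod]; exact Finset.prod_ne_zero_iff.2 fun i _ => ha i
lemma abs_poch_le {a b : ℝ} (hab : |a| ≤ b) (k : ℕ) : |poch a k| ≤ poch b k := by
  rw [poch_eq_prod, poch_eq_prod, Finset.abs_prod]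
  refine Finset.prod_le_prod (fun i _ => abs_nonneg _) (fun i _ => ?_)
  calc |a + (i:ℝ)| ≤ |a| + i := by
        refine (abs_add_le _ _).trans ?_
        simp
      _ ≤ b + i := by linarith
lemma poch_one (k : ℕ) : poch 1 k = k.factorial := by
  induction k with
  | zero => simp [poch_zero]
  | succ n ih => rw [poch_succ, ih]; push_cast [Nat.factorial_succ]; ring
lemma poch_two (k : ℕ) : poch 2 k = (k+1).factorial := by
  induction k with
  | zero => simp [poch_zero]
  | succ n ih => rw [poch_succ, ih]; push_cast [Nat.factorial_succ]; ring
lemma factorial_poch (k : ℕ) : ((k+1).factorial : ℝ) = (k.factorial) * (k+1) := by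
  push_cast [Nat.factorial_succ]; ring
open Topology in
lemma tendsto_ratio_shift (c d : ℝ) :
    Tendsto (fun m : ℕ => (c + m) / (d + m)) atTop (𝓝 1) := by
  have h1 : Tendsto (fun m : ℕ => (d : ℝ) + m) atTop atTop :=
    tendsto_atTop_add_const_left _ _ tendsto_natCast_atTop_atTop
  have h2 : Tendsto (fun m : ℕ => (c - d) / (d + m)) atTop (𝓝 0) :=
    h1.const_div_atTop (c - d)
  have h3 : Tendsto (fun m : ℕ => 1 + (c - d) / (d + m)) atTop (𝓝 (1 + 0)) :=
    tendsto_const_nhds.add h2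
  rw [add_zero] at h3
  refine h3.congr' ?_
  filter_upwards [h1.eventually_gt_atTop 0] with m hm
  field_simp; ring

open Topology in
lemma summable_ratio_aux {f g : ℕ → ℝ} {L : ℝ} (hL : L < 1)
    (hfg : ∀ᶠ m in atTop, |f (m+1)| ≤ g m * |f m|)
    (hg : Tendsto g atTop (𝓝 L)) : Summable f := by
  set r : ℝ := (max L 0 + 1) / 2 with hr
  have hr1 : r < 1 := by
    have : max L 0 < 1 := max_lt hL one_pos
    rw [hr]; linarith
  have hLr : L < r := by
    have h0 : L ≤ max L 0 := le_max_left _ _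
    have : max L 0 < r := by rw [hr]; linarith [max_lt hL one_pos]
    linarith
  refine summable_of_ratio_norm_eventually_le hr1 ?_
  filter_upwards [hfg, hg.eventually_lt_const hLr] with m h1 h2
  simp only [Real.norm_eq_abs]
  calc |f (m+1)| ≤ g m * |f m| := h1
    _ ≤ r * |f m| := mul_le_mul_of_nonneg_right h2.le (abs_nonneg _)
open Topology in
lemma tendsto_abs_ratio (c d x : ℝ) :
    Tendsto (fun m : ℕ => |(c + m) / (d + m) * x|) atTop (𝓝 |x|) := by
  have := ((tendsto_ratio_shift c d).mul_const x).abs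
  simpa using this

open Topology in
lemma summable_of_term_ratio {f q : ℕ → ℝ} {L : ℝ} (hL : L < 1)
    (h : ∀ m, f (m + 1) = f m * q m)
    (hq : Tendsto (fun m => |q m|) atTop (𝓝 L)) : Summable f := by
  refine summable_ratio_aux hL ?_ hq
  filter_upwards with m
  rw [h, abs_mul, mul_comm]

/-- Summability of binomial-type series. -/
lemma summable_binom (s x : ℝ) (hx : |x| < 1) :
    Summable (fun m : ℕ => poch s m / m.factorial * x ^ m) := by
  refine summable_of_term_ratio hx (q := fun m => (s + m) / (1 + m) * x) ?_
    (tendsto_abs_ratio s 1 x)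
  intro m
  have hf : (m.factorial : ℝ) ≠ 0 := Nat.cast_ne_zero.2 m.factorial_ne_zero
  have hm : (1 : ℝ) + m ≠ 0 := by positivity
  rw [poch_succ, factorial_poch, pow_succ]
  field_simp
  ring

/-- Summability of hypergeometric-type series. -/
lemma summable_hyp (a b g x : ℝ) (hg : ∀ i : ℕ, g + i ≠ 0) (hx : |x| < 1) :
    Summable (fun k : ℕ => poch a k * poch b k / (poch g k * k.factorial) * x ^ k) := by
  refine summable_of_term_ratio hx
    (q := fun k => (a + k) / (g + k) * ((b + k) / (1 + k) * x)) ?_ ?_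
  · intro m
    have hf : (m.factorial : ℝ) ≠ 0 := Nat.cast_ne_zero.2 m.factorial_ne_zero
    have hm : (1 : ℝ) + m ≠ 0 := by positivity
    have hgm : g + m ≠ 0 := hg m
    have hp : poch g m ≠ 0 := poch_ne_zero hg m
    rw [poch_succ, poch_succ, poch_succ, factorial_poch, pow_succ]
    field_simp
    ring
  · have h1 := tendsto_ratio_shift a g
    have h2 := ((tendsto_ratio_shift b 1).mul_const x)
    have := (h1.mul h2).abs
    simpa using this
lemma const_of_hasDerivAt_zero {f : ℝ → ℝ} {s : Set ℝ} (hs : Convex ℝ s)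
    (h : ∀ x ∈ s, HasDerivAt f 0 x) {x y : ℝ} (hx : x ∈ s) (hy : y ∈ s) : f x = f y := by
  have := hs.norm_image_sub_le_of_norm_hasDerivWithin_le
    (f' := fun _ => (0:ℝ)) (C := 0) (fun u hu => (h u hu).hasDerivWithinAt)
    (fun u hu => by simp) hx hy
  simp only [zero_mul, norm_le_zero_iff, sub_eq_zero] at this
  exact this.symm

lemma poch_div_factorial_succ (s : ℝ) (m : ℕ) :
    poch s (m+1) / ((m+1).factorial : ℝ) = poch s m / m.factorial * ((s + m) / (1 + m)) := by
  have hf : (m.factorial : ℝ) ≠ 0 := Nat.cast_ne_zero.2 m.factorial_ne_zero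
  have hm : (1 : ℝ) + m ≠ 0 := by positivity
  rw [poch_succ, factorial_poch, mul_div_mul_comm, add_comm (m:ℝ) 1]
lemma shifted_term (s : ℝ) (m : ℕ) :
    poch s (m+1) / ((m+1).factorial : ℝ) * ((m:ℝ)+1) = s * (poch (s+1) m / m.factorial) := by
  have hm : ((m:ℝ)+1) ≠ 0 := by positivity
  have hf : (m.factorial : ℝ) ≠ 0 := Nat.cast_ne_zero.2 m.factorial_ne_zero
  rw [poch_succ_left, factorial_poch]
  field_simp

open Topology in
set_option maxHeartbeats 1000000 in
lemma binom_hasSum (s : ℝ) {z : ℝ} (h0 : 0 ≤ z) (h1 : z < 1) :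
    HasSum (fun m : ℕ => poch s m / m.factorial * z ^ m) ((1 - z) ^ (-s)) := by
  rcases eq_or_lt_of_le h0 with h0 | h0
  · subst h0
    rw [sub_zero, Real.one_rpow]
    convert hasSum_single (f := fun m : ℕ => poch s m / m.factorial * (0:ℝ) ^ m) 0
      (fun m hm => ?_) using 1
    · simp [poch_zero]
    · simp [zero_pow hm]
  set r : ℝ := (z + 1) / 2 with hrdef
  have hzr : z < r := by rw [hrdef]; linarith
  have hr1 : r < 1 := by rw [hrdef]; linarith
  have hr0 : 0 < r := by rw [hrdef]; linarith
  set c : ℕ → ℝ := fun m => poch s m / m.factorial with hc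
  have habs : ∀ y ∈ Set.Ioo (-r) r, |y| < r := fun y hy => abs_lt.2 ⟨hy.1, hy.2⟩
  have hmemz : z ∈ Set.Ioo (-r) r := ⟨by linarith, hzr⟩
  have hmem0 : (0:ℝ) ∈ Set.Ioo (-r) r := ⟨by linarith, hr0⟩
  have key : ∀ m (y : ℝ), c (m+1) * (((m:ℝ)+1) * y ^ m) = s * (poch (s+1) m / m.factorial * y ^ m) := by
    intro m y
    have := shifted_term s m
    simp only [hc]
    calc poch s (m+1) / ((m+1).factorial : ℝ) * (((m:ℝ)+1) * y ^ m)
        = (poch s (m+1) / ((m+1).factorial : ℝ) * ((m:ℝ)+1)) * y ^ m := by ring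
      _ = s * (poch (s+1) m / m.factorial) * y ^ m := by rw [this]
      _ = s * (poch (s+1) m / m.factorial * y ^ m) := by ring
  -- summability of various series
  have hS1 : ∀ y ∈ Set.Ioo (-r) r, Summable (fun m => c m * y ^ m) := fun y hy => by
    simpa [hc] using summable_binom s y ((habs y hy).trans hr1)
  have hSD : ∀ y ∈ Set.Ioo (-r) r, Summable (fun m => c m * ((m:ℝ) * y ^ (m - 1))) := by
    intro y hy
    rw [← summable_nat_add_iff 1]
    simp only [Nat.add_sub_cancel]
    refine ((summable_binom (s+1) y ((habs y hy).trans hr1)).mul_left s).congr fun m => ?_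
    rw [← key m y]
    push_cast
    ring
  have hu : Summable (fun m => |c m| * ((m:ℝ) * r ^ (m - 1))) := by
    rw [← summable_nat_add_iff 1]
    simp only [Nat.add_sub_cancel]
    refine (((summable_binom (s+1) r (by rwa [abs_of_pos hr0])).abs).mul_left |s|).congr
      fun m => ?_
    rw [← abs_mul, ← key m r, abs_mul, abs_of_nonneg (by positivity : (0:ℝ) ≤ ((m:ℝ)+1) * r ^ m)]
    push_cast
    ring
  -- derivative of the sum
  have hderiv : ∀ y ∈ Set.Ioo (-r) r,
      HasDerivAt (fun x : ℝ => ∑' m, c m * x ^ m) (∑' m, c m * ((m:ℝ) * y ^ (m - 1))) y := by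
    intro y hy
    refine hasDerivAt_tsum_of_isPreconnected (𝕜 := ℝ) (F := ℝ)
      (g := fun m x => c m * x ^ m) (g' := fun m x => c m * ((m:ℝ) * x ^ (m - 1)))
      hu isOpen_Ioo
      (convex_Ioo _ _).isPreconnected (fun m u hu' => ?_) (fun m u hu' => ?_) hmem0 ?_ hy
    · exact (hasDerivAt_pow m u).const_mul (c m)
    · rw [Real.norm_eq_abs, abs_mul, abs_mul]
      refine mul_le_mul_of_nonneg_left ?_ (abs_nonneg _)
      rw [abs_of_nonneg (by positivity : (0:ℝ) ≤ (m:ℝ))]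
      refine mul_le_mul_of_nonneg_left ?_ (by positivity)
      rw [abs_pow]
      exact pow_le_pow_left₀ (abs_nonneg _) (habs u hu').le _
    · refine summable_of_ne_finset_zero (s := {0}) (fun m hm => ?_)
      simp only [Finset.mem_singleton] at hm
      simp [zero_pow hm]
  -- key ODE identity
  have hkey : ∀ y ∈ Set.Ioo (-r) r,
      (1 - y) * (∑' m, c m * ((m:ℝ) * y ^ (m - 1))) = s * ∑' m, c m * y ^ m := by
    intro y hy
    have hS2 : Summable (fun m => s * (poch (s+1) m / m.factorial * y ^ m)) :=
      (summable_binom (s+1) y ((habs y hy).trans hr1)).mul_left s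
    have e1 : (∑' m, c m * ((m:ℝ) * y ^ (m - 1))) = ∑' m, s * (poch (s+1) m / m.factorial * y ^ m) := by
      rw [Summable.tsum_eq_zero_add (hSD y hy)]
      simp only [Nat.cast_zero, Nat.add_sub_cancel, zero_mul, mul_zero, zero_add]
      refine tsum_congr fun m => ?_
      rw [← key m y]
      push_cast
      ring
    have e2 : y * (∑' m, c m * ((m:ℝ) * y ^ (m - 1))) = ∑' m, (s * (poch (s+1) m / m.factorial * y ^ m) - s * (c m * y ^ m)) := by
      rw [← tsum_mul_left]
      refine tsum_congr fun m => ?_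
      have hpoch : poch s m * (s + m) = s * poch (s+1) m := by
        rw [← poch_succ, poch_succ_left]
      cases m with
      | zero =>
        simp only [Nat.cast_zero, zero_mul, mul_zero, pow_zero, hc]
        simp [poch_zero]
      | succ j =>
        have h2 := (poch_succ_left s (j+1)).symm.trans (poch_succ s (j+1))
        simp only [Nat.add_sub_cancel, hc]
        push_cast at h2 ⊢
        linear_combination (-(y ^ j * y) / (((j+1).factorial : ℕ) : ℝ)) * h2

    rw [sub_mul, one_mul, e2, e1, Summable.tsum_sub hS2 ((hS1 y hy).mul_left s)]
    simp only [tsum_mul_left]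
    ring
  -- the auxiliary function is constant
  have hφderiv : ∀ y ∈ Set.Ioo (-r) r,
      HasDerivAt (fun x : ℝ => (1 - x) ^ s * ∑' m, c m * x ^ m) 0 y := by
    intro y hy
    have hy1 : (0:ℝ) < 1 - y := by
      have := hy.2; have := hr1; simp only [Set.mem_Ioo] at hy; linarith [hy.2]
    have hlin : HasDerivAt (fun x : ℝ => 1 - x) (-1) y := by
      simpa using (hasDerivAt_id y).const_sub 1
    have hpow : HasDerivAt (fun x : ℝ => (1 - x) ^ s) (-1 * s * (1 - y) ^ (s - 1)) y :=
      hlin.rpow_const (Or.inl (ne_of_gt hy1))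
    have hprod : HasDerivAt (fun x : ℝ => (1 - x) ^ s * ∑' m, c m * x ^ m) _ y :=
      hpow.mul (hderiv y hy)
    convert hprod using 1
    have h1s : (1 - y) ^ s = (1 - y) ^ (s - 1) * (1 - y) := by
      nth_rewrite 1 [show s = (s-1) + 1 by ring]
      rw [Real.rpow_add hy1, Real.rpow_one]
    rw [h1s]
    have hk := hkey y hy
    linear_combination (-((1 - y) ^ (s - 1))) * hk
  have hconst : (1 - z) ^ s * (∑' m, c m * z ^ m) = (1 - (0:ℝ)) ^ s * ∑' m, c m * (0:ℝ) ^ m :=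
    const_of_hasDerivAt_zero (f := fun x : ℝ => (1 - x) ^ s * ∑' m, c m * x ^ m)
      (convex_Ioo _ _) hφderiv hmemz hmem0
  have hg0 : (∑' m, c m * (0:ℝ) ^ m) = 1 := by
    rw [tsum_eq_single 0 (fun m hm => by simp [zero_pow hm])]
    simp [hc, poch_zero]
  rw [hg0, sub_zero, Real.one_rpow, mul_one] at hconst
  have hz1 : (0:ℝ) < 1 - z := by linarith
  have hgz : (∑' m, c m * z ^ m) = (1 - z) ^ (-s) := by
    rw [Real.rpow_neg hz1.le]
    exact (inv_eq_of_mul_eq_one_right hconst).symm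
  have hfin := (hS1 z hmemz).hasSum
  rw [hgz] at hfin
  exact hfin
lemma chu_vandermonde : ∀ (n : ℕ) (B G : ℝ),
    (∑ k ∈ Finset.range (n+1),
      (-1:ℝ)^k * (n.choose k : ℝ) * poch B k * poch (G + k) (n - k)) = poch (G - B) n := by
  intro n
  induction n with
  | zero => intro B G; simp [poch_zero]
  | succ n ih =>
    intro B G
    set a2 : ℕ → ℝ := fun j => (-1:ℝ)^j * (n.choose j : ℝ) * poch B j * poch (G + j) (n + 1 - j)
      with ha2
    have hstep : ∀ i ∈ Finset.range (n+1),
        (-1:ℝ)^(i+1) * (((n+1).choose (i+1) : ℕ) : ℝ) * poch B (i+1) *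
            poch (G + ((i+1 : ℕ) : ℝ)) (n + 1 - (i+1))
          = (-B) * ((-1:ℝ)^i * (n.choose i : ℝ) * poch (B+1) i * poch ((G+1) + i) (n - i))
            + a2 (i+1) := by
      intro i hi
      have hch : (((n+1).choose (i+1) : ℕ) : ℝ) = (n.choose i : ℝ) + (n.choose (i+1) : ℝ) := by
        rw [Nat.choose_succ_succ]; push_cast; ring
      have hsub : n + 1 - (i+1) = n - i := by omega
      have hG : G + ((i+1 : ℕ) : ℝ) = (G + 1) + (i : ℝ) := by push_cast; ring
      rw [hch, hsub, hG, poch_succ_left B i, ha2]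
      simp only []
      have hsub2 : n + 1 - (i+1) = n - i := by omega
      rw [hsub2]
      have hG2 : G + ((i+1 : ℕ) : ℝ) = (G + 1) + (i : ℝ) := by push_cast; ring
      rw [hG2, poch_succ_left B i]
      ring
    calc ∑ k ∈ Finset.range (n+1+1),
        (-1:ℝ)^k * (((n+1).choose k : ℕ) : ℝ) * poch B k * poch (G + k) (n + 1 - k)
        = (∑ i ∈ Finset.range (n+1),
            (-1:ℝ)^(i+1) * (((n+1).choose (i+1) : ℕ) : ℝ) * poch B (i+1) *
              poch (G + ((i+1 : ℕ) : ℝ)) (n + 1 - (i+1)))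
          + (-1:ℝ)^0 * (((n+1).choose 0 : ℕ) : ℝ) * poch B 0 * poch (G + (0:ℕ)) (n + 1 - 0) := by
          exact Finset.sum_range_succ' _ (n+1)
      _ = (∑ i ∈ Finset.range (n+1),
            ((-B) * ((-1:ℝ)^i * (n.choose i : ℝ) * poch (B+1) i * poch ((G+1) + i) (n - i))
              + a2 (i+1)))
          + a2 0 := by
          rw [Finset.sum_congr rfl hstep]
          congr 1
          simp [ha2, poch_zero]
      _ = (-B) * (∑ i ∈ Finset.range (n+1),
            (-1:ℝ)^i * (n.choose i : ℝ) * poch (B+1) i * poch ((G+1) + i) (n - i))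
          + ((∑ i ∈ Finset.range (n+1), a2 (i+1)) + a2 0) := by
          rw [Finset.sum_add_distrib, ← Finset.mul_sum]
          ring
      _ = (-B) * poch (G - B) n + (∑ j ∈ Finset.range (n+2), a2 j) := by
          rw [ih (B+1) (G+1), Finset.sum_range_succ' a2 (n+1),
            show (G+1) - (B+1) = G - B by ring]
      _ = (-B) * poch (G - B) n
          + (∑ j ∈ Finset.range (n+1),
              ((-1:ℝ)^j * (n.choose j : ℝ) * poch B j * poch (G + j) (n - j)) * (G + n)) := by
          rw [Finset.sum_range_succ]
          have ha2top : a2 (n+1) = 0 := by simp [ha2]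
          rw [ha2top, add_zero]
          congr 1
          refine Finset.sum_congr rfl fun j hj => ?_
          have hj' : j ≤ n := by simpa [Nat.lt_succ_iff] using hj
          have h1 : n + 1 - j = (n - j) + 1 := by omega
          rw [ha2]
          simp only []
          rw [h1, poch_succ]
          have hc : (G + (j:ℝ)) + ((n - j : ℕ) : ℝ) = G + n := by
            rw [Nat.cast_sub hj']
            ring
          rw [hc]
          ring
      _ = poch (G - B) (n+1) := by
          rw [← Finset.sum_mul, ih B G, poch_succ]
          ring
lemma tsum_prod_eq_tsum_range {F : ℕ × ℕ → ℝ} (h : Summable F) :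
    ∑' p : ℕ × ℕ, F p = ∑' n : ℕ, ∑ k ∈ Finset.range (n+1), F (k, n - k) := by
  have h2 : Summable fun x : Σ n : ℕ, {p // p ∈ Finset.HasAntidiagonal.antidiagonal n} => F (x.2 : ℕ × ℕ) :=
    (Finset.HasAntidiagonal.sigmaAntidiagonalEquivProd.summable_iff (f := F)).2 h
  rw [← Finset.HasAntidiagonal.sigmaAntidiagonalEquivProd.tsum_eq F]
  have : ∀ n : ℕ, ∑ k ∈ Finset.range (n+1), F (k, n - k)
      = ∑ kl ∈ Finset.HasAntidiagonal.antidiagonal n, F kl := by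
    intro n
    rw [← Finset.Nat.sum_antidiagonal_eq_sum_range_succ (fun k l => F (k, l))]
  simp_rw [this]
  rw [show (∑' c : (n : ℕ) × {x // x ∈ Finset.HasAntidiagonal.antidiagonal n},
      F (Finset.HasAntidiagonal.sigmaAntidiagonalEquivProd c)) = ∑' c : (n : ℕ) × {x // x ∈ Finset.HasAntidiagonal.antidiagonal n},
      F (c.2 : ℕ × ℕ) from tsum_congr fun c => rfl]
  rw [Summable.tsum_sigma' (fun n => (hasSum_fintype _).summable) h2]
  refine tsum_congr fun n => ?_
  rw [← Finset.sum_finset_coe, ← tsum_fintype (L := SummationFilter.unconditional _)]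
  rfl
set_option maxHeartbeats 1600000 in
lemma pfaff (A B G z : ℝ) (hG : ∀ i : ℕ, G + i ≠ 0) (hz0 : 0 < z) (hz : z < 1/2) :
    ∑' k : ℕ, poch A k * poch B k / (poch G k * k.factorial) * (z / (z - 1)) ^ k
      = (1 - z) ^ A *
        ∑' k : ℕ, poch A k * poch (G - B) k / (poch G k * k.factorial) * z ^ k := by
  have hz1 : z < 1 := by linarith
  have h1z : (0:ℝ) < 1 - z := by linarith
  have hξ : z / (1 - z) < 1 := by
    rw [div_lt_one h1z]; linarith
  have hξ0 : 0 < z / (1 - z) := by positivity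
  set t : ℕ → ℝ := fun k => poch A k * poch B k / (poch G k * k.factorial) with ht
  -- (z/(z-1))^k in convenient form
  have hinv : ∀ k : ℕ, ((-1:ℝ)^k)⁻¹ = (-1:ℝ)^k := by
    intro k
    rcases neg_one_pow_eq_or ℝ k with h | h <;> rw [h] <;> norm_num
  have hwk : ∀ k : ℕ, (z/(z-1))^k = (-1:ℝ)^k * z^k * ((1-z)^k)⁻¹ := by
    intro k
    rw [div_pow, show (z-1) = -(1-z) by ring, neg_pow, div_eq_mul_inv, mul_inv, hinv k]
    ring
  -- rpow splitting
  have hrpow : ∀ (q : ℝ) (k : ℕ), (1-z) ^ (-(q + k)) = (1-z) ^ (-q) * ((1-z)^k)⁻¹ := by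
    intro q k
    have h2 : (1-z) ^ (-(k:ℝ)) = ((1-z)^k)⁻¹ := by
      rw [Real.rpow_neg h1z.le, Real.rpow_natCast]
    rw [show -(q + (k:ℝ)) = -q + (-(k:ℝ)) by ring, Real.rpow_add h1z, h2]
  set f : ℕ × ℕ → ℝ := fun p =>
    t p.1 * (-1:ℝ)^p.1 * (poch (A + p.1) p.2 / p.2.factorial) * z ^ (p.1 + p.2) with hf
  -- rows
  have hrow : ∀ k : ℕ, HasSum (fun m => f (k, m)) (t k * (z/(z-1))^k * (1-z) ^ (-A)) := by
    intro k
    have hb := (binom_hasSum (A + k) hz0.le hz1).mul_left (t k * (-1:ℝ)^k * z^k)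
    have e : ∀ m : ℕ, t k * (-1:ℝ)^k * z^k * (poch (A + k) m / m.factorial * z ^ m)
        = f (k, m) := by
      intro m
      rw [hf]
      simp only [pow_add]
      ring
    rw [show t k * (z/(z-1))^k * (1-z) ^ (-A)
        = t k * (-1:ℝ)^k * z^k * (1-z) ^ (-(A + k)) by
      rw [hrpow A k, hwk k]; ring]
    simp only [← e]
    exact hb
  -- majorant rows
  have hmajrow : ∀ k : ℕ, HasSum
      (fun m => |t k| * (poch (|A| + k) m / m.factorial) * z ^ (k + m))
      (|t k| * z^k * (1-z) ^ (-(|A| + k))) := by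
    intro k
    have hb := (binom_hasSum (|A| + k) hz0.le hz1).mul_left (|t k| * z^k)
    have e : ∀ m : ℕ, |t k| * z^k * (poch (|A| + k) m / m.factorial * z ^ m)
        = |t k| * (poch (|A| + k) m / m.factorial) * z ^ (k + m) := by
      intro m
      rw [pow_add]
      ring
    simp only [← e]
    exact hb
  have habsle : ∀ p : ℕ × ℕ, |f p| ≤ |t p.1| * (poch (|A| + p.1) p.2 / p.2.factorial)
      * z ^ (p.1 + p.2) := by
    rintro ⟨k, m⟩
    rw [hf]
    simp only [abs_mul, abs_pow, abs_div, abs_neg, abs_one, one_pow, mul_one,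
      Nat.abs_cast, abs_of_pos hz0]
    have h1 : |poch (A + k) m| ≤ poch (|A| + k) m := by
      refine abs_poch_le ?_ m
      calc |A + (k:ℝ)| ≤ |A| + k := by
            refine (abs_add_le _ _).trans ?_
            simp
          _ = |A| + k := rfl
    have h2 : (0:ℝ) ≤ |t k| / (m.factorial : ℝ) := by positivity
    gcongr
  -- summable majorant
  have hmajsum : Summable (fun p : ℕ × ℕ =>
      |t p.1| * (poch (|A| + p.1) p.2 / p.2.factorial) * z ^ (p.1 + p.2)) := by
    rw [summable_prod_of_nonneg (fun p => by
      have := poch_nonneg (a := |A| + p.1) (by positivity) p.2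
      positivity)]
    constructor
    · exact fun k => (hmajrow k).summable
    · refine Summable.congr ?_ (fun k => ((hmajrow k).tsum_eq).symm)
      have hbase : Summable (fun k => |t k| * (z/(1-z))^k) := by
        refine ((summable_hyp A B G (z/(1-z)) hG (by rwa [abs_of_pos hξ0])).abs).congr ?_
        intro k
        rw [abs_mul, abs_pow, abs_of_pos hξ0]
      refine ((hbase.mul_left ((1-z) ^ (-|A|))).congr (fun k => ?_))
      rw [hrpow (|A|) k, div_pow]
      rw [div_eq_mul_inv]
      ring
  have hfsummable : Summable f :=
    Summable.of_abs (Summable.of_nonneg_of_le (fun p => abs_nonneg _) habsle hmajsum)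
  -- first evaluation of the double sum
  have hev1 : ∑' p : ℕ × ℕ, f p
      = (∑' k, t k * (z/(z-1))^k) * (1-z) ^ (-A) := by
    rw [Summable.tsum_prod' hfsummable (fun k => (hrow k).summable)]
    rw [show (∑' (k : ℕ), ∑' (m : ℕ), f (k, m))
        = ∑' k, (t k * (z/(z-1))^k * (1-z) ^ (-A)) from
      tsum_congr (fun k => (hrow k).tsum_eq)]
    rw [tsum_mul_right]
  -- second evaluation: regrouping along diagonals
  have hev2 : ∑' p : ℕ × ℕ, f p
      = ∑' n, poch A n * poch (G - B) n / (poch G n * n.factorial) * z ^ n := by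
    rw [tsum_prod_eq_tsum_range hfsummable]
    refine tsum_congr fun n => ?_
    have hterm : ∀ k ∈ Finset.range (n+1), f (k, n - k)
        = (poch A n * z^n / (poch G n * n.factorial))
          * ((-1:ℝ)^k * (n.choose k : ℝ) * poch B k * poch (G + k) (n - k)) := by
      intro k hk
      have hk' : k ≤ n := by simpa [Nat.lt_succ_iff] using hk
      have e1 : poch A k * poch (A + k) (n - k) = poch A n := by
        rw [← poch_add]
        congr 1
        omega
      have e2 : poch G k * poch (G + k) (n - k) = poch G n := by
        rw [← poch_add]
        congr 1
        omega
      have e3 : ((n.choose k : ℕ) : ℝ) * k.factorial * (n - k).factorial = n.factorial := by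
        exact_mod_cast congrArg (Nat.cast : ℕ → ℝ)
          (Nat.choose_mul_factorial_mul_factorial hk')
      have hGk : poch G k ≠ 0 := poch_ne_zero hG k
      have hGk2 : poch (G + k) (n - k) ≠ 0 := by
        refine poch_ne_zero (fun i => ?_) (n - k)
        have := hG (k + i)
        push_cast at this
        rw [add_assoc]
        exact this
      have hfk : (k.factorial : ℝ) ≠ 0 := Nat.cast_ne_zero.2 k.factorial_ne_zero
      have hfnk : ((n - k).factorial : ℝ) ≠ 0 := Nat.cast_ne_zero.2 (n - k).factorial_ne_zero
      have hfn : (n.factorial : ℝ) ≠ 0 := Nat.cast_ne_zero.2 n.factorial_ne_zero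
      rw [hf]
      simp only [ht]
      have hkm : k + (n - k) = n := by omega
      have hch : ((n.choose k : ℕ) : ℝ) ≠ 0 := Nat.cast_ne_zero.2 (Nat.choose_pos hk').ne'
      rw [hkm, ← e1, ← e2, ← e3]
      field_simp
    rw [Finset.sum_congr rfl hterm, ← Finset.mul_sum, chu_vandermonde n B G]
    ring
  -- combine
  have hkeyeq : (∑' k, t k * (z/(z-1))^k) * (1-z) ^ (-A)
      = ∑' n, poch A n * poch (G - B) n / (poch G n * n.factorial) * z ^ n := by
    rw [← hev1, hev2]
  have hne : (1-z) ^ (-A) ≠ 0 := by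
    positivity
  have : (∑' k, t k * (z/(z-1))^k)
      = (1-z) ^ A * ∑' n, poch A n * poch (G - B) n / (poch G n * n.factorial) * z ^ n := by
    rw [← hkeyeq]
    rw [Real.rpow_neg h1z.le]
    field_simp
  simpa only [ht] using this
lemma shift_sum (p q r x : ℝ) (hr : ∀ i : ℕ, r + i ≠ 0) (hx : |x| < 1) :
    ∑' k : ℕ, poch p k * poch q k / (poch r k * k.factorial) * x ^ k
      = 1 + (p * q * x / r) *
          ∑' j : ℕ, poch (p+1) j * poch (q+1) j / (((j+1).factorial : ℝ) * poch (r+1) j)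
            * x ^ j := by
  rw [Summable.tsum_eq_zero_add (summable_hyp p q r x hr hx)]
  congr 1
  · simp [poch_zero]
  rw [← tsum_mul_left]
  refine tsum_congr fun j => ?_
  have hr0 : r ≠ 0 := by simpa using hr 0
  have hrp : poch (r+1) j ≠ 0 := by
    refine poch_ne_zero (fun i => ?_) j
    have := hr (i+1)
    push_cast at this
    rw [show r + 1 + (i:ℝ) = r + ((i:ℝ) + 1) by ring]
    exact this
  have hfj : ((j+1).factorial : ℝ) ≠ 0 := Nat.cast_ne_zero.2 (j+1).factorial_ne_zero
  rw [poch_succ_left p, poch_succ_left q, poch_succ_left r, pow_succ]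
  field_simp

/-- the transformation of `₃F₂(1,b,c;2,e;z/(z-1))`. -/
theorem threeF2_transformation (b c e z : ℝ) (hb : b ≠ 1) (hc : c ≠ 1) (he : 0 < e)
    (hz0 : 0 < z) (hz : z < 1/2) :
    ∑' k : ℕ, poch b k * poch c k / ((Nat.factorial (k + 1) : ℝ) * poch e k) *
        (z / (z - 1)) ^ k =
      (1 - z) ^ b * ((c - e) / (c - 1)) *
        ∑' k : ℕ, poch b k * poch (e - c + 1) k * z ^ k /
          ((Nat.factorial (k + 1) : ℝ) * poch e k) +
      (e - 1) * (1 - z) * (1 - (1 - z) ^ (b - 1)) / ((c - 1) * (b - 1) * z) := by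

  have hz1 : z < 1 := by linarith
  have h1z : (0:ℝ) < 1 - z := by linarith
  have hzm1 : z - 1 ≠ 0 := by intro h; linarith [sub_eq_zero.1 h]
  have hzne : z ≠ 0 := ne_of_gt hz0
  have hb1 : b - 1 ≠ 0 := sub_ne_zero.2 hb
  have hc1 : c - 1 ≠ 0 := sub_ne_zero.2 hc
  have hwabs : |z / (z - 1)| < 1 := by
    rw [abs_div, abs_of_pos hz0, abs_of_neg (by linarith : z - 1 < 0)]
    rw [div_lt_one (by linarith : (0:ℝ) < -(z-1))]
    linarith
  have hzabs : |z| < 1 := by rw [abs_of_pos hz0]; linarith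
  by_cases he1 : e = 1
  · -- case e = 1
    subst he1
    have hG2 : ∀ i : ℕ, (2:ℝ) + i ≠ 0 := fun i => by positivity
    have hp := pfaff b c 2 z hG2 hz0 hz
    have el : (∑' k : ℕ, poch b k * poch c k / ((Nat.factorial (k + 1) : ℝ) * poch 1 k) *
        (z / (z - 1)) ^ k)
        = ∑' k : ℕ, poch b k * poch c k / (poch 2 k * k.factorial) * (z / (z - 1)) ^ k := by
      refine tsum_congr fun k => ?_
      rw [poch_one, poch_two]
    have er : (∑' k : ℕ, poch b k * poch (1 - c + 1) k * z ^ k /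
          ((Nat.factorial (k + 1) : ℝ) * poch 1 k))
        = ∑' k : ℕ, poch b k * poch (2 - c) k / (poch 2 k * k.factorial) * z ^ k := by
      refine tsum_congr fun k => ?_
      rw [poch_one, poch_two, show (1:ℝ) - c + 1 = 2 - c by ring]
      ring
    rw [el, er, hp]
    rw [show (2:ℝ) - c = 2 - c from rfl]
    have : (c - 1) / (c - 1) = 1 := div_self hc1
    rw [show (1:ℝ) - 1 = 0 by ring]
    simp [this]
  · -- case e ≠ 1
    have he1' : e - 1 ≠ 0 := sub_ne_zero.2 he1
    have hGE : ∀ i : ℕ, (e - 1) + i ≠ 0 := by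
      intro i
      cases i with
      | zero => simpa using he1'
      | succ j =>
        have : (0:ℝ) ≤ j := Nat.cast_nonneg j
        push_cast
        intro hcon
        linarith
    have hp := pfaff (b-1) (c-1) (e-1) z hGE hz0 hz
    rw [shift_sum (b-1) (c-1) (e-1) (z/(z-1)) hGE hwabs,
      shift_sum (b-1) ((e-1)-(c-1)) (e-1) z hGE hzabs] at hp
    simp only [show b - 1 + 1 = b by ring, show c - 1 + 1 = c by ring,
      show e - 1 + 1 = e by ring, show (e-1) - (c-1) = e - c by ring,
      show e - c + 1 = e - c + 1 from rfl] at hp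
    -- identify series
    set HL := ∑' k : ℕ, poch b k * poch c k / ((Nat.factorial (k + 1) : ℝ) * poch e k) *
        (z / (z - 1)) ^ k with hHL
    set HR := ∑' k : ℕ, poch b k * poch (e - c + 1) k * z ^ k /
          ((Nat.factorial (k + 1) : ℝ) * poch e k) with hHR
    have eR : (∑' j : ℕ, poch b j * poch (e - c + 1) j / (((j+1).factorial : ℝ) * poch e j)
        * z ^ j) = HR := by
      rw [hHR]
      refine tsum_congr fun j => ?_
      ring
    rw [eR] at hp
    -- hp : 1 + ((b-1)*(c-1)*(z/(z-1))/(e-1)) * HL = (1-z)^(b-1) * (1 + ((b-1)*(e-c)*z/(e-1)) * HR)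
    have hbpow : (1 - z) ^ b = (1 - z) ^ (b - 1) * (1 - z) := by
      nth_rewrite 1 [show b = (b - 1) + 1 by ring]
      rw [Real.rpow_add h1z, Real.rpow_one]
    rw [hbpow]
    set P := (1 - z) ^ (b - 1) with hP
    field_simp at hp ⊢
    have hp2 : (z-1)*(e-1) + (b-1)*(c-1)*z*HL = P*(e-1+(b-1)*(e-c)*z*HR)*(z-1) := by
      apply mul_right_cancel₀ he1'
      linear_combination (e-1) * hp
    linear_combination hp2
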